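/- (Lemma 4.2 of the paper) Let 𝑴 be a real symmetric positive definite M×M matrix with unique symmetric positive definite square root 𝑴^{1/2} and 𝑴^{−1/2} = (𝑴^{1/2})^{−1}, let 𝒜 be a real symmetric positive definite M×M matrix, and let U₀ ∈ ℝ^M. Then there exists a constant C > 0, depending only on 𝑴, 𝒜 and U₀ (in particular independent of n and τ), such that the following holds: for every integer n ≥ 1 and every τ ∈ (0,1) with max{τ‖𝒜‖₂, ‖I − τ𝒜‖₂} < 1 and nτ ≤ 1, if Ũ is the M×(n+1) matrix with columns Ũ_k = 𝑴^{−1/2}(I + τ𝒜)^{−k}𝑴^{1/2}U₀ (k = 0, …, n), Ū* is the M×(n+1) matrix with columns Ū*_k = (1 − τ‖𝒜‖₂)^k U₀ (k = 0, …, n), X̃ = ŨᵀŨ and X̄* = Ū*ᵀŪ*, then ‖X̃ − X̄*‖_F² ≤ C n⁴ τ². -/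

import Mathlib

open Matrix Finset

/-- The spectral norm (operator 2-norm) of a real square matrix. -/
noncomputable def spec {M : ℕ} (A : Matrix (Fin M) (Fin M) ℝ) : ℝ :=
  ‖LinearMap.toContinuousLinearMap (Matrix.toEuclideanLin A)‖

/-- The squared Frobenius norm of a real matrix. -/
noncomputable def frobSq {m l : ℕ} (A : Matrix (Fin m) (Fin l) ℝ) : ℝ :=
  ∑ i, ∑ j, (A i j) ^ 2

/-- The squared Euclidean norm of a real vector. -/
noncomputable def vecNormSq {M : ℕ} (x : Fin M → ℝ) : ℝ := ∑ i, (x i) ^ 2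

/-- The Euclidean norm of a real vector. -/
noncomputable def vecNorm {M : ℕ} (x : Fin M → ℝ) : ℝ := Real.sqrt (∑ i, (x i) ^ 2)

/-- The M×(n+1) matrix whose columns are the vectors `v 0, …, v n`. -/
noncomputable def colMat {M n : ℕ} (v : Fin (n + 1) → Fin M → ℝ) :
    Matrix (Fin M) (Fin (n + 1)) ℝ :=
  Matrix.of fun i k => v k i

open scoped Matrix.Norms.L2Operator

lemma spec_eq_norm {M : ℕ} (A : Matrix (Fin M) (Fin M) ℝ) : spec A = ‖A‖ := rfl

lemma spec_nonneg {M : ℕ} (A : Matrix (Fin M) (Fin M) ℝ) : 0 ≤ spec A := norm_nonneg _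

lemma spec_one_le {M : ℕ} : spec (1 : Matrix (Fin M) (Fin M) ℝ) ≤ 1 := by
  have h : LinearMap.toContinuousLinearMap (Matrix.toEuclideanLin (1 : Matrix (Fin M) (Fin M) ℝ))
      = ContinuousLinearMap.id ℝ (EuclideanSpace ℝ (Fin M)) := by
    ext x
    simp [Matrix.toEuclideanLin_apply, Matrix.one_mulVec]
  rw [spec, h]
  exact ContinuousLinearMap.norm_id_le

lemma vecNorm_eq {M : ℕ} (x : Fin M → ℝ) :
    vecNorm x = ‖(WithLp.equiv 2 (Fin M → ℝ)).symm x‖ := by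
  rw [EuclideanSpace.norm_eq, vecNorm]
  simp only [WithLp.equiv_symm_apply, WithLp.ofLp_toLp, Real.norm_eq_abs, sq_abs]

lemma vecNorm_nonneg {M : ℕ} (x : Fin M → ℝ) : 0 ≤ vecNorm x := Real.sqrt_nonneg _

lemma vecNorm_mulVec_le {M : ℕ} (A : Matrix (Fin M) (Fin M) ℝ) (x : Fin M → ℝ) :
    vecNorm (A *ᵥ x) ≤ spec A * vecNorm x := by
  rw [vecNorm_eq, vecNorm_eq, spec_eq_norm]
  exact Matrix.l2_opNorm_mulVec A ((WithLp.equiv 2 (Fin M → ℝ)).symm x)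

lemma vecNorm_smul {M : ℕ} (r : ℝ) (x : Fin M → ℝ) : vecNorm (r • x) = |r| * vecNorm x := by
  rw [vecNorm_eq, vecNorm_eq, ← Real.norm_eq_abs, ← norm_smul]
  congr 1


lemma abs_dot_le {M : ℕ} (x y : Fin M → ℝ) : |x ⬝ᵥ y| ≤ vecNorm x * vecNorm y := by
  unfold dotProduct vecNorm
  calc |∑ i, x i * y i| ≤ ∑ i, |x i * y i| := Finset.abs_sum_le_sum_abs _ _
    _ = ∑ i, |x i| * |y i| := by simp [abs_mul]
    _ ≤ Real.sqrt (∑ i, |x i| ^ 2) * Real.sqrt (∑ i, |y i| ^ 2) :=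
        Real.sum_mul_le_sqrt_mul_sqrt _ _ _
    _ = Real.sqrt (∑ i, x i ^ 2) * Real.sqrt (∑ i, y i ^ 2) := by simp [sq_abs]

lemma vecNorm_sq {M : ℕ} (x : Fin M → ℝ) : x ⬝ᵥ x = vecNorm x ^ 2 := by
  rw [vecNorm, Real.sq_sqrt (by positivity)]
  simp [dotProduct, sq]

lemma spec_inv_le {M : ℕ} {A : Matrix (Fin M) (Fin M) ℝ} (hA : A.PosDef) {τ : ℝ} (hτ : 0 < τ) :
    spec ((1 + τ • A)⁻¹) ≤ 1 := by
  classical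
  have hPD : (1 + τ • A).PosDef := by
    refine Matrix.PosDef.add Matrix.PosDef.one (Matrix.PosDef.of_dotProduct_mulVec_pos ?_ fun ⦃x⦄ hx => ?_)
    · unfold Matrix.IsHermitian at *
      rw [Matrix.conjTranspose_smul, hA.1]
      simp
    · rw [Matrix.smul_mulVec, dotProduct_smul, smul_eq_mul]
      exact mul_pos hτ (hA.dotProduct_mulVec_pos hx)
  have hdet : IsUnit (1 + τ • A).det := isUnit_iff_ne_zero.mpr hPD.det_pos.ne'
  have hmul : (1 + τ • A) * (1 + τ • A)⁻¹ = 1 := Matrix.mul_nonsing_inv _ hdet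
  have key : ∀ x : Fin M → ℝ, vecNorm x ≤ vecNorm ((1 + τ • A) *ᵥ x) := by
    intro x
    have h1 : x ⬝ᵥ x ≤ x ⬝ᵥ ((1 + τ • A) *ᵥ x) := by
      rw [Matrix.add_mulVec, Matrix.one_mulVec, dotProduct_add,
        Matrix.smul_mulVec, dotProduct_smul, smul_eq_mul]
      have := hA.posSemidef.dotProduct_mulVec_nonneg x
      simp only [star_trivial] at this
      nlinarith
    have h2 := (le_abs_self _).trans (abs_dot_le x ((1 + τ • A) *ᵥ x))
    have h3 : vecNorm x ^ 2 ≤ vecNorm x * vecNorm ((1 + τ • A) *ᵥ x) := by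
      rw [← vecNorm_sq]; exact h1.trans h2
    rcases eq_or_lt_of_le (vecNorm_nonneg x) with h | h
    · rw [← h]; exact vecNorm_nonneg _
    · rw [sq] at h3
      exact le_of_mul_le_mul_left h3 h
  have key2 : ∀ y : Fin M → ℝ, vecNorm ((1 + τ • A)⁻¹ *ᵥ y) ≤ vecNorm y := by
    intro y
    have := key ((1 + τ • A)⁻¹ *ᵥ y)
    rwa [Matrix.mulVec_mulVec, hmul, Matrix.one_mulVec] at this
  rw [spec]
  apply ContinuousLinearMap.opNorm_le_bound _ zero_le_one
  intro y
  rw [one_mul]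
  have := key2 ((WithLp.equiv 2 (Fin M → ℝ)) y)
  rw [vecNorm_eq, vecNorm_eq] at this
  exact this

set_option maxHeartbeats 1000000

lemma spec_mul_le {M : ℕ} (A B : Matrix (Fin M) (Fin M) ℝ) : spec (A * B) ≤ spec A * spec B := by
  rw [spec_eq_norm, spec_eq_norm, spec_eq_norm]; exact Matrix.l2_opNorm_mul A B

lemma spec_smul {M : ℕ} (r : ℝ) (A : Matrix (Fin M) (Fin M) ℝ) : spec (r • A) = |r| * spec A := by
  rw [spec_eq_norm, spec_eq_norm, norm_smul, Real.norm_eq_abs]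

lemma spec_add_le {M : ℕ} (A B : Matrix (Fin M) (Fin M) ℝ) : spec (A + B) ≤ spec A + spec B := by
  rw [spec_eq_norm, spec_eq_norm, spec_eq_norm]; exact norm_add_le A B

lemma spec_sub_le {M : ℕ} (A B : Matrix (Fin M) (Fin M) ℝ) : spec (A - B) ≤ spec A + spec B := by
  rw [spec_eq_norm, spec_eq_norm, spec_eq_norm]; exact norm_sub_le A B

/-- **Lemma 4.2.** There is a constant `C > 0`, independent of `n` and `τ`, such that
for all `n ≥ 1` and `τ ∈ (0,1)` with `max{τ‖𝒜‖₂, ‖I - τ𝒜‖₂} < 1` and `nτ ≤ 1`,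
`‖X̃ - X̄*‖_F² ≤ C n⁴ τ²`, where `X̃ = ŨᵀŨ` with `Ũ_k = 𝑴^{-1/2}(I + τ𝒜)^{-k}𝑴^{1/2}U₀`
and `X̄* = Ū*ᵀŪ*` with `Ū*_k = (1 - τ‖𝒜‖₂)^k U₀`. -/
theorem lemma_4_2 {M : ℕ} (Mmat Msq A : Matrix (Fin M) (Fin M) ℝ)
    (hM : Mmat.PosDef) (hMsq : Msq.PosDef) (hsq : Msq * Msq = Mmat)
    (hA : A.PosDef) (U₀ : Fin M → ℝ) :
    ∃ C > 0, ∀ n : ℕ, 1 ≤ n → ∀ τ : ℝ, 0 < τ → τ < 1 →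
      τ * spec A < 1 → spec (1 - τ • A) < 1 → (n : ℝ) * τ ≤ 1 →
      frobSq ((colMat fun k : Fin (n + 1) =>
            (Msq⁻¹ * ((1 + τ • A)⁻¹) ^ (k : ℕ) * Msq).mulVec U₀)ᵀ *
          (colMat fun k : Fin (n + 1) =>
            (Msq⁻¹ * ((1 + τ • A)⁻¹) ^ (k : ℕ) * Msq).mulVec U₀) -
          (colMat fun k : Fin (n + 1) => (1 - τ * spec A) ^ (k : ℕ) • U₀)ᵀ *
          (colMat fun k : Fin (n + 1) => (1 - τ * spec A) ^ (k : ℕ) • U₀)) ≤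
        C * (n : ℝ) ^ 4 * τ ^ 2 := by
  classical
  set s := spec A with hs
  set κ₁ := spec (Msq⁻¹) with hκ₁def
  set κ₂ := spec Msq with hκ₂def
  set ν := vecNorm U₀ with hνdef
  have hs0 : 0 ≤ s := spec_nonneg A
  have hκ₁ : 0 ≤ κ₁ := spec_nonneg _
  have hκ₂ : 0 ≤ κ₂ := spec_nonneg _
  have hν : 0 ≤ ν := vecNorm_nonneg _
  clear_value κ₁ κ₂ ν
  set K : ℝ := 4 * (s + 1) * (κ₁ * κ₂ + 1) ^ 2 * (ν + 1) ^ 2 with hK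
  have hK0 : 0 < K := by rw [hK]; positivity
  clear_value K
  refine ⟨4 * K ^ 2 + 1, by positivity, ?_⟩
  intro n hn τ hτ0 hτ1 hτs _ hnτ
  set c : ℝ := 1 - τ * s with hc
  have hc0 : 0 ≤ c := by rw [hc]; linarith
  have hc1 : c ≤ 1 := by rw [hc]; nlinarith
  have hck : ∀ k : ℕ, |c ^ k| ≤ 1 := by
    intro k
    rw [abs_pow, abs_of_nonneg hc0]
    exact pow_le_one₀ hc0 hc1
  clear_value c
  set B := (1 + τ • A)⁻¹ with hB
  have hPD : (1 + τ • A).PosDef := by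
    refine Matrix.PosDef.add Matrix.PosDef.one (Matrix.PosDef.of_dotProduct_mulVec_pos ?_ fun ⦃x⦄ hx => ?_)
    · unfold Matrix.IsHermitian at *
      rw [Matrix.conjTranspose_smul, hA.1]
      simp
    · rw [Matrix.smul_mulVec, dotProduct_smul, smul_eq_mul]
      exact mul_pos hτ0 (hA.dotProduct_mulVec_pos hx)
  have hdet : IsUnit (1 + τ • A).det := isUnit_iff_ne_zero.mpr hPD.det_pos.ne'
  have hmul' : B * (1 + τ • A) = 1 := Matrix.nonsing_inv_mul _ hdet
  have hBle : spec B ≤ 1 := spec_inv_le hA hτ0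
  clear_value B
  have hdetS : IsUnit Msq.det := isUnit_iff_ne_zero.mpr hMsq.det_pos.ne'
  have hSinv : Msq⁻¹ * Msq = 1 := Matrix.nonsing_inv_mul _ hdetS
  set e : ℝ := 2 * (τ * s) with he
  have he0 : 0 ≤ e := by rw [he]; positivity
  clear_value e
  -- bound on B - c•1
  have hEid : B - c • (1 : Matrix (Fin M) (Fin M) ℝ)
      = B * ((1 : Matrix (Fin M) (Fin M) ℝ) - c • (1 + τ • A)) := by
    rw [mul_sub, mul_one, mul_smul_comm, hmul']
  have hEid2 : (1 : Matrix (Fin M) (Fin M) ℝ) - c • (1 + τ • A)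
      = (τ * s) • (1 : Matrix (Fin M) (Fin M) ℝ) - (c * τ) • A := by
    rw [hc]; module
  have hE : spec (B - c • (1 : Matrix (Fin M) (Fin M) ℝ)) ≤ e := by
    rw [hEid, hEid2]
    calc spec (B * ((τ * s) • (1 : Matrix (Fin M) (Fin M) ℝ) - (c * τ) • A))
        ≤ spec B * spec ((τ * s) • (1 : Matrix (Fin M) (Fin M) ℝ) - (c * τ) • A) :=
          spec_mul_le _ _
      _ ≤ 1 * (|τ * s| * spec (1 : Matrix (Fin M) (Fin M) ℝ) + |c * τ| * s) := by
          apply mul_le_mul hBle ((spec_sub_le _ _).trans ?_) (spec_nonneg _) zero_le_one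
          rw [spec_smul, spec_smul]
      _ ≤ e := by
          rw [he, one_mul, abs_of_nonneg (by positivity), abs_of_nonneg (by positivity)]
          nlinarith [spec_one_le (M := M), spec_nonneg (1 : Matrix (Fin M) (Fin M) ℝ)]
  -- powers
  have hBk : ∀ k : ℕ, spec (B ^ k) ≤ 1 := by
    intro k
    induction k with
    | zero => simpa using spec_one_le (M := M)
    | succ k ih =>
        rw [pow_succ]
        calc spec (B ^ k * B) ≤ spec (B ^ k) * spec B := spec_mul_le _ _
          _ ≤ 1 * 1 := mul_le_mul ih hBle (spec_nonneg _) zero_le_one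
          _ = 1 := one_mul 1
  have hBkc : ∀ k : ℕ, spec (B ^ k - (c ^ k) • (1 : Matrix (Fin M) (Fin M) ℝ)) ≤ k * e := by
    intro k
    induction k with
    | zero => simp [spec_eq_norm]
    | succ k ih =>
        have hid : B ^ (k + 1) - c ^ (k + 1) • (1 : Matrix (Fin M) (Fin M) ℝ)
            = B * (B ^ k - c ^ k • (1 : Matrix (Fin M) (Fin M) ℝ))
              + c ^ k • (B - c • (1 : Matrix (Fin M) (Fin M) ℝ)) := by
          rw [mul_sub, smul_sub, mul_smul_comm, mul_one, smul_smul, ← pow_succ', ← pow_succ]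
          abel
        rw [hid]
        calc spec (B * (B ^ k - c ^ k • (1 : Matrix (Fin M) (Fin M) ℝ))
              + c ^ k • (B - c • (1 : Matrix (Fin M) (Fin M) ℝ)))
            ≤ spec (B * (B ^ k - c ^ k • (1 : Matrix (Fin M) (Fin M) ℝ)))
              + spec (c ^ k • (B - c • (1 : Matrix (Fin M) (Fin M) ℝ))) := spec_add_le _ _
          _ ≤ spec B * spec (B ^ k - c ^ k • (1 : Matrix (Fin M) (Fin M) ℝ))
              + |c ^ k| * spec (B - c • (1 : Matrix (Fin M) (Fin M) ℝ)) := by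
              rw [spec_smul]
              exact add_le_add (spec_mul_le _ _) le_rfl
          _ ≤ 1 * (k * e) + 1 * e := by
              apply add_le_add
              · exact mul_le_mul hBle ih (spec_nonneg _) zero_le_one
              · exact mul_le_mul (hck k) hE (spec_nonneg _) zero_le_one
          _ = (k + 1 : ℕ) * e := by push_cast; ring
  -- vectors
  have hDk : ∀ k : ℕ, Msq⁻¹ * (B ^ k - c ^ k • (1 : Matrix (Fin M) (Fin M) ℝ)) * Msq
      = Msq⁻¹ * B ^ k * Msq - c ^ k • (1 : Matrix (Fin M) (Fin M) ℝ) := by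
    intro k
    rw [mul_sub, sub_mul, mul_smul_comm, mul_one, smul_mul_assoc, hSinv]
  have hspec3 : ∀ X : Matrix (Fin M) (Fin M) ℝ, spec (Msq⁻¹ * X * Msq) ≤ κ₁ * spec X * κ₂ := by
    intro X
    rw [hκ₁def, hκ₂def]
    calc spec (Msq⁻¹ * X * Msq) ≤ spec (Msq⁻¹ * X) * spec Msq := spec_mul_le _ _
      _ ≤ spec Msq⁻¹ * spec X * spec Msq :=
          mul_le_mul_of_nonneg_right (spec_mul_le _ _) (spec_nonneg _)
  have hu : ∀ k : ℕ, vecNorm ((Msq⁻¹ * B ^ k * Msq) *ᵥ U₀) ≤ κ₁ * κ₂ * ν := by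
    intro k
    rw [hνdef]
    calc vecNorm ((Msq⁻¹ * B ^ k * Msq) *ᵥ U₀) ≤ spec (Msq⁻¹ * B ^ k * Msq) * vecNorm U₀ :=
          vecNorm_mulVec_le _ _
      _ ≤ (κ₁ * 1 * κ₂) * vecNorm U₀ := by
          apply mul_le_mul_of_nonneg_right _ (vecNorm_nonneg _)
          exact (hspec3 _).trans (by
            apply mul_le_mul_of_nonneg_right _ hκ₂
            exact mul_le_mul_of_nonneg_left (hBk k) hκ₁)
      _ = κ₁ * κ₂ * vecNorm U₀ := by ring
  have hw : ∀ k : ℕ, vecNorm ((c ^ k) • U₀) ≤ ν := by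
    intro k
    rw [hνdef, vecNorm_smul]
    calc |c ^ k| * vecNorm U₀ ≤ 1 * vecNorm U₀ := mul_le_mul_of_nonneg_right (hck k) (vecNorm_nonneg _)
      _ = vecNorm U₀ := one_mul _
  have hd : ∀ k : ℕ, vecNorm ((Msq⁻¹ * B ^ k * Msq) *ᵥ U₀ - (c ^ k) • U₀)
      ≤ κ₁ * κ₂ * ((k : ℝ) * e) * ν := by
    intro k
    have hvec : (Msq⁻¹ * B ^ k * Msq) *ᵥ U₀ - (c ^ k) • U₀
        = (Msq⁻¹ * B ^ k * Msq - c ^ k • (1 : Matrix (Fin M) (Fin M) ℝ)) *ᵥ U₀ := by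
      rw [Matrix.sub_mulVec, Matrix.smul_mulVec, Matrix.one_mulVec]
    rw [hvec, ← hDk, hνdef]
    calc vecNorm ((Msq⁻¹ * (B ^ k - c ^ k • (1 : Matrix (Fin M) (Fin M) ℝ)) * Msq) *ᵥ U₀)
        ≤ spec (Msq⁻¹ * (B ^ k - c ^ k • (1 : Matrix (Fin M) (Fin M) ℝ)) * Msq) * vecNorm U₀ :=
          vecNorm_mulVec_le _ _
      _ ≤ (κ₁ * ((k : ℝ) * e) * κ₂) * vecNorm U₀ := by
          apply mul_le_mul_of_nonneg_right _ (vecNorm_nonneg _)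
          exact (hspec3 _).trans (by
            apply mul_le_mul_of_nonneg_right _ hκ₂
            exact mul_le_mul_of_nonneg_left (hBkc k) hκ₁)
      _ = κ₁ * κ₂ * ((k : ℝ) * e) * vecNorm U₀ := by ring
  -- entrywise bound
  have entry : ∀ k l : ℕ, (k : ℝ) ≤ n → (l : ℝ) ≤ n →
      |((Msq⁻¹ * B ^ k * Msq) *ᵥ U₀) ⬝ᵥ ((Msq⁻¹ * B ^ l * Msq) *ᵥ U₀)
        - ((c ^ k) • U₀) ⬝ᵥ ((c ^ l) • U₀)| ≤ K * n * τ := by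
    intro k l hkn hln
    set uk := (Msq⁻¹ * B ^ k * Msq) *ᵥ U₀
    set ul := (Msq⁻¹ * B ^ l * Msq) *ᵥ U₀
    set wk := (c ^ k) • U₀
    set wl := (c ^ l) • U₀
    have hsplit : uk ⬝ᵥ ul - wk ⬝ᵥ wl = (uk - wk) ⬝ᵥ ul + wk ⬝ᵥ (ul - wl) := by
      rw [sub_dotProduct, dotProduct_sub]; ring
    rw [hsplit]
    have h1 : |(uk - wk) ⬝ᵥ ul| ≤ (κ₁ * κ₂ * ((k : ℝ) * e) * ν) * (κ₁ * κ₂ * ν) :=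
      (abs_dot_le _ _).trans (mul_le_mul (hd k) (hu l) (vecNorm_nonneg _)
        (by positivity))
    have h2 : |wk ⬝ᵥ (ul - wl)| ≤ ν * (κ₁ * κ₂ * ((l : ℝ) * e) * ν) :=
      (abs_dot_le _ _).trans (mul_le_mul (hw k) (hd l) (vecNorm_nonneg _) hν)
    calc |(uk - wk) ⬝ᵥ ul + wk ⬝ᵥ (ul - wl)| ≤ |(uk - wk) ⬝ᵥ ul| + |wk ⬝ᵥ (ul - wl)| :=
          abs_add_le _ _
      _ ≤ (κ₁ * κ₂ * ((k : ℝ) * e) * ν) * (κ₁ * κ₂ * ν) + ν * (κ₁ * κ₂ * ((l : ℝ) * e) * ν) :=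
          add_le_add h1 h2
      _ ≤ K * n * τ := by
          rw [hK, he]
          have hn1 : (1 : ℝ) ≤ (n : ℝ) := by exact_mod_cast hn
          have ha2 : (κ₁*κ₂)^2 * (k:ℝ) + (κ₁*κ₂) * l ≤ 2*(κ₁*κ₂+1)^2*(n:ℝ) := by
            have e1 : (κ₁*κ₂)^2 * (k:ℝ) ≤ (κ₁*κ₂+1)^2 * n :=
              mul_le_mul (by nlinarith [mul_nonneg hκ₁ hκ₂]) hkn (by positivity) (by positivity)
            have e2 : (κ₁*κ₂) * (l:ℝ) ≤ (κ₁*κ₂+1)^2 * n :=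
              mul_le_mul (by nlinarith [mul_nonneg hκ₁ hκ₂]) hln (by positivity) (by positivity)
            linarith
          have hsv : τ * s * ν^2 ≤ τ * (s+1) * (ν+1)^2 := by
            nlinarith [mul_nonneg hτ0.le hs0, sq_nonneg ν, hν]
          nlinarith [mul_le_mul hsv ha2 (by positivity) (by positivity)]
  -- conclusion
  have hbig : ∀ i j : Fin (n + 1),
      ((colMat fun k : Fin (n + 1) => (Msq⁻¹ * B ^ (k : ℕ) * Msq) *ᵥ U₀)ᵀ *
        (colMat fun k : Fin (n + 1) => (Msq⁻¹ * B ^ (k : ℕ) * Msq) *ᵥ U₀) -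
        (colMat fun k : Fin (n + 1) => c ^ (k : ℕ) • U₀)ᵀ *
        (colMat fun k : Fin (n + 1) => c ^ (k : ℕ) • U₀)) i j
      = ((Msq⁻¹ * B ^ (i : ℕ) * Msq) *ᵥ U₀) ⬝ᵥ ((Msq⁻¹ * B ^ (j : ℕ) * Msq) *ᵥ U₀)
        - ((c ^ (i : ℕ)) • U₀) ⬝ᵥ ((c ^ (j : ℕ)) • U₀) := by
    intro i j
    simp [colMat, Matrix.mul_apply, Matrix.sub_apply, Matrix.transpose_apply, dotProduct]
  have main : ∀ X : Matrix (Fin (n + 1)) (Fin (n + 1)) ℝ,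
      (∀ i j, |X i j| ≤ K * n * τ) → frobSq X ≤ (4 * K ^ 2 + 1) * (n : ℝ) ^ 4 * τ ^ 2 := by
    intro X hX
    unfold frobSq
    have hsq : ∀ i j : Fin (n + 1), (X i j) ^ 2 ≤ (K * n * τ) ^ 2 := fun i j => by
      rw [← sq_abs]
      exact pow_le_pow_left₀ (abs_nonneg _) (hX i j) 2
    calc ∑ i, ∑ j, (X i j) ^ 2
        ≤ ∑ _i : Fin (n + 1), ∑ _j : Fin (n + 1), (K * n * τ) ^ 2 :=
          Finset.sum_le_sum fun i _ => Finset.sum_le_sum fun j _ => hsq i j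
      _ = ((n : ℝ) + 1) ^ 2 * (K * n * τ) ^ 2 := by
          simp [Finset.sum_const, Finset.card_univ]
          push_cast
          ring
      _ ≤ (4 * K ^ 2 + 1) * (n : ℝ) ^ 4 * τ ^ 2 := by
          have hn1 : (1 : ℝ) ≤ (n : ℝ) := by exact_mod_cast hn
          have h4 : ((n : ℝ) + 1) ^ 2 ≤ 4 * (n : ℝ) ^ 2 := by nlinarith
          nlinarith [mul_le_mul_of_nonneg_right h4
              (by positivity : (0:ℝ) ≤ K ^ 2 * (n : ℝ) ^ 2 * τ ^ 2),
            (by positivity : (0:ℝ) ≤ (n : ℝ) ^ 4 * τ ^ 2)]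
  apply main
  intro i j
  rw [hbig i j]
  exact entry i j (by exact_mod_cast Fin.is_le i) (by exact_mod_cast Fin.is_le j)
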